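/- Let q = (q₁, q₂, …) be a probability distribution on {1,2,…} with first moment m₁ = Σ k q_k finite, and for a probability measure μ on ℝ≥0 define μ^q = Σ_{k≥1} q_k μ^{*k} (the q-mixture of convolution powers). Then for any two probability measures μ, ν on ℝ≥0, the Wasserstein distance (with respect to the truncated metric min(1,|x-y|)) satisfies W(μ^q, ν^q) ≤ m₁ · W(μ, ν). -/

import Mathlib

open MeasureTheory ProbabilityTheory Filter
open scoped ENNReal NNReal

noncomputable section

/-- Truncated Euclidean cost `ρ(x,y) = min(1, |x-y|)` on `ℝ≥0`. -/
def rho (x y : ℝ≥0) : ℝ := min 1 |(x : ℝ) - (y : ℝ)|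

/-- `π` is a coupling of `μ` and `ν`. -/
def IsCoupling (π : Measure (ℝ≥0 × ℝ≥0)) (μ ν : Measure ℝ≥0) : Prop :=
  π.map Prod.fst = μ ∧ π.map Prod.snd = ν

/-- Wasserstein distance for the truncated cost. -/
def W (μ ν : Measure ℝ≥0) : ℝ :=
  sInf { r : ℝ | ∃ π : Measure (ℝ≥0 × ℝ≥0),
    IsProbabilityMeasure π ∧ IsCoupling π μ ν ∧ r = ∫ p, rho p.1 p.2 ∂π }

/-- Convolution of two measures on `ℝ≥0`. -/
def conv (μ ν : Measure ℝ≥0) : Measure ℝ≥0 :=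
  (μ.prod ν).map (fun p => p.1 + p.2)

/-- `k`-fold convolution power (`convPow μ 0 = δ₀`). -/
def convPow (μ : Measure ℝ≥0) : ℕ → Measure ℝ≥0
  | 0 => Measure.dirac 0
  | n + 1 => conv (convPow μ n) μ

/-- The `q`-mixture `μ^q = ∑_{k≥1} q_k μ^{*k}` (`q k` = weight of `k`). -/
def qMix (q : ℕ → ℝ≥0) (μ : Measure ℝ≥0) : Measure ℝ≥0 :=
  Measure.sum (fun k => ((q (k + 1) : ℝ≥0∞)) • convPow μ (k + 1))

/-- Total variation norm of the difference of two finite measures. -/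
def tvDist (μ ν : Measure ℝ≥0) : ℝ :=
  sSup { r : ℝ | ∃ s : Set ℝ≥0, MeasurableSet s ∧
    r = |(μ s).toReal - (ν s).toReal| + |(μ sᶜ).toReal - (ν sᶜ).toReal| }

lemma rho_nonneg (x y : ℝ≥0) : 0 ≤ rho x y := le_min one_pos.le (abs_nonneg _)
lemma rho_le_one (x y : ℝ≥0) : rho x y ≤ 1 := min_le_left _ _

lemma rho_add_le (a b x y : ℝ≥0) : rho (a + x) (b + y) ≤ rho a b + rho x y := by
  unfold rho
  rcases le_total 1 |(a:ℝ) - b| with h | h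
  · rw [min_eq_left h]
    calc min 1 |((a+x:ℝ≥0):ℝ) - ((b+y:ℝ≥0):ℝ)| ≤ 1 := min_le_left _ _
      _ ≤ 1 + min 1 |(x:ℝ) - y| := le_add_of_nonneg_right (le_min one_pos.le (abs_nonneg _))
  · rcases le_total 1 |(x:ℝ) - y| with h2 | h2
    · rw [min_eq_left h2]
      calc min 1 |((a+x:ℝ≥0):ℝ) - ((b+y:ℝ≥0):ℝ)| ≤ 1 := min_le_left _ _
        _ ≤ min 1 |(a:ℝ) - b| + 1 := le_add_of_nonneg_left (le_min one_pos.le (abs_nonneg _))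
    · rw [min_eq_right h, min_eq_right h2]
      calc min 1 |((a+x:ℝ≥0):ℝ) - ((b+y:ℝ≥0):ℝ)| ≤ |((a+x:ℝ≥0):ℝ) - ((b+y:ℝ≥0):ℝ)| :=
            min_le_right _ _
        _ ≤ |(a:ℝ) - b| + |(x:ℝ) - y| := by
            push_cast
            calc |(a:ℝ) + x - (b + y)| = |((a:ℝ) - b) + ((x:ℝ) - y)| := by ring_nf
              _ ≤ _ := abs_add_le _ _

lemma continuous_rho : Continuous (fun p : ℝ≥0 × ℝ≥0 => rho p.1 p.2) := by
  unfold rho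
  fun_prop

lemma integrable_rho (π : Measure (ℝ≥0 × ℝ≥0)) [IsFiniteMeasure π] :
    Integrable (fun p : ℝ≥0 × ℝ≥0 => rho p.1 p.2) π := by
  refine (integrable_const (1:ℝ)).mono' continuous_rho.aestronglyMeasurable ?_
  filter_upwards with p
  rw [Real.norm_eq_abs, abs_of_nonneg (rho_nonneg _ _)]
  exact rho_le_one _ _

def cPow (π : Measure (ℝ≥0 × ℝ≥0)) : ℕ → Measure (ℝ≥0 × ℝ≥0)
  | 0 => Measure.dirac (0, 0)
  | n + 1 => ((cPow π n).prod π).map (fun p => (p.1.1 + p.2.1, p.1.2 + p.2.2))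

lemma measurable_addpair :
    Measurable (fun p : (ℝ≥0 × ℝ≥0) × (ℝ≥0 × ℝ≥0) => (p.1.1 + p.2.1, p.1.2 + p.2.2)) := by
  fun_prop

instance cPow_prob (π : Measure (ℝ≥0 × ℝ≥0)) [IsProbabilityMeasure π] (n : ℕ) :
    IsProbabilityMeasure (cPow π n) := by
  induction n with
  | zero => rw [cPow]; infer_instance
  | succ n ih =>
      rw [cPow]
      exact Measure.isProbabilityMeasure_map measurable_addpair.aemeasurable

instance convPow_prob (μ : Measure ℝ≥0) [IsProbabilityMeasure μ] (n : ℕ) :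
    IsProbabilityMeasure (convPow μ n) := by
  induction n with
  | zero => rw [convPow]; infer_instance
  | succ n ih =>
      rw [convPow, conv]
      exact Measure.isProbabilityMeasure_map (by fun_prop)

lemma cPow_fst (π : Measure (ℝ≥0 × ℝ≥0)) [IsProbabilityMeasure π]
    (μ : Measure ℝ≥0) [IsProbabilityMeasure μ] (hfst : π.map Prod.fst = μ) (n : ℕ) :
    (cPow π n).map Prod.fst = convPow μ n := by
  induction n with
  | zero => rw [cPow, convPow, Measure.map_dirac' measurable_fst]
  | succ n ih =>
      rw [cPow, convPow, conv, ← ih, ← hfst]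
      rw [Measure.map_prod_map _ _ measurable_fst measurable_fst]
      rw [Measure.map_map measurable_fst measurable_addpair,
        Measure.map_map (by fun_prop) (measurable_fst.prodMap measurable_fst)]
      rfl

lemma cPow_snd (π : Measure (ℝ≥0 × ℝ≥0)) [IsProbabilityMeasure π]
    (ν : Measure ℝ≥0) [IsProbabilityMeasure ν] (hsnd : π.map Prod.snd = ν) (n : ℕ) :
    (cPow π n).map Prod.snd = convPow ν n := by
  induction n with
  | zero => rw [cPow, convPow, Measure.map_dirac' measurable_snd]
  | succ n ih =>
      rw [cPow, convPow, conv, ← ih, ← hsnd]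
      rw [Measure.map_prod_map _ _ measurable_snd measurable_snd]
      rw [Measure.map_map measurable_snd measurable_addpair,
        Measure.map_map (by fun_prop) (measurable_snd.prodMap measurable_snd)]
      rfl

lemma integrable_rho_comp {α : Type*} [MeasurableSpace α] (π : Measure α) [IsFiniteMeasure π]
    (f : α → ℝ≥0 × ℝ≥0) (hf : Measurable f) :
    Integrable (fun a => rho (f a).1 (f a).2) π := by
  refine (integrable_const (1:ℝ)).mono'
    ((continuous_rho.measurable.comp hf).aestronglyMeasurable) ?_
  filter_upwards with p
  rw [Real.norm_eq_abs, abs_of_nonneg (rho_nonneg _ _)]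
  exact rho_le_one _ _

lemma integral_rho_cPow_le (π : Measure (ℝ≥0 × ℝ≥0)) [IsProbabilityMeasure π] (n : ℕ) :
    ∫ p, rho p.1 p.2 ∂(cPow π n) ≤ n * ∫ p, rho p.1 p.2 ∂π := by
  induction n with
  | zero =>
      rw [cPow, integral_dirac]
      simp [rho]
  | succ n ih =>
      rw [cPow, integral_map measurable_addpair.aemeasurable
        continuous_rho.aestronglyMeasurable]
      have key : ∫ p, rho (p.1.1 + p.2.1) (p.1.2 + p.2.2) ∂((cPow π n).prod π) ≤
          ∫ p, (rho p.1.1 p.1.2 + rho p.2.1 p.2.2) ∂((cPow π n).prod π) := by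
        refine integral_mono ?_ ?_ (fun p => rho_add_le _ _ _ _)
        · have := integrable_rho (((cPow π n).prod π).map
            (fun p : (ℝ≥0 × ℝ≥0) × (ℝ≥0 × ℝ≥0) => (p.1.1 + p.2.1, p.1.2 + p.2.2)))
          rw [integrable_map_measure continuous_rho.aestronglyMeasurable
            measurable_addpair.aemeasurable] at this
          exact this
        · exact (integrable_rho_comp _ _ measurable_fst).add
            (integrable_rho_comp _ _ measurable_snd)
      refine key.trans ?_
      rw [integral_add (integrable_rho_comp _ _ measurable_fst)
        (integrable_rho_comp _ _ measurable_snd)]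
      have hmf : ((cPow π n).prod π).map Prod.fst = cPow π n := by
        rw [Measure.map_fst_prod]; simp
      have hms : ((cPow π n).prod π).map Prod.snd = π := by
        rw [Measure.map_snd_prod]; simp
      have h1 := integral_map (μ := (cPow π n).prod π) (φ := Prod.fst)
        (f := fun p : ℝ≥0 × ℝ≥0 => rho p.1 p.2) measurable_fst.aemeasurable
        continuous_rho.aestronglyMeasurable
      have h2 := integral_map (μ := (cPow π n).prod π) (φ := Prod.snd)
        (f := fun p : ℝ≥0 × ℝ≥0 => rho p.1 p.2) measurable_snd.aemeasurable
        continuous_rho.aestronglyMeasurable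
      rw [hmf] at h1
      rw [hms] at h2
      rw [← h1, ← h2]
      push_cast
      nlinarith [integral_nonneg (f := fun p : ℝ≥0 × ℝ≥0 => rho p.1 p.2) (fun p : ℝ≥0 × ℝ≥0 => rho_nonneg p.1 p.2) (μ := π)]

set_option maxHeartbeats 1000000 in
/-- `W(μ^q, ν^q) ≤ m₁ W(μ,ν)` for an offspring distribution `q` with first moment `m₁`. -/
theorem wasserstein_qMix_le (q : ℕ → ℝ≥0) (hq0 : q 0 = 0) (hq1 : ∑' k, q k = 1)
    (m₁ : ℝ) (hm₁ : HasSum (fun k : ℕ => (k : ℝ) * (q k : ℝ)) m₁)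
    (μ ν : Measure ℝ≥0) [IsProbabilityMeasure μ] [IsProbabilityMeasure ν] :
    W (qMix q μ) (qMix q ν) ≤ m₁ * W μ ν := by
  -- q is summable
  have hqsum : Summable q := by
    by_contra h
    rw [tsum_eq_zero_of_not_summable h] at hq1
    exact one_ne_zero hq1.symm
  have hq1' : HasSum (fun k => (q k : ℝ)) 1 := by
    have := NNReal.hasSum_coe.2 hqsum.hasSum
    rwa [hq1] at this
  -- shifted first-moment sum
  have hshift : HasSum (fun k : ℕ => (((k : ℕ) + 1 : ℕ) : ℝ) * (q (k + 1) : ℝ)) m₁ := by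
    refine (hasSum_nat_add_iff (f := fun k : ℕ => (k : ℝ) * (q k : ℝ)) 1).2 ?_
    simpa using hm₁
  -- m₁ ≥ 1
  have hm₁one : 1 ≤ m₁ := by
    refine hasSum_le (fun k => ?_) hq1' hm₁
    rcases k with _ | k
    · simp [hq0]
    · exact le_mul_of_one_le_left (q _).coe_nonneg (by exact_mod_cast Nat.succ_le_succ k.zero_le)
  have hm₁pos : 0 < m₁ := lt_of_lt_of_le one_pos hm₁one
  set S := { r : ℝ | ∃ π : Measure (ℝ≥0 × ℝ≥0),
    IsProbabilityMeasure π ∧ IsCoupling π μ ν ∧ r = ∫ p, rho p.1 p.2 ∂π } with hS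
  -- S is nonempty
  have hSne : S.Nonempty := by
    refine ⟨∫ p, rho p.1 p.2 ∂(μ.prod ν), μ.prod ν, inferInstance, ⟨?_, ?_⟩, rfl⟩
    · rw [Measure.map_fst_prod]; simp
    · rw [Measure.map_snd_prod]; simp
  -- the key bound for each coupling
  have key : ∀ r ∈ S, W (qMix q μ) (qMix q ν) ≤ m₁ * r := by
    rintro r ⟨π, hπ, ⟨hf, hs⟩, rfl⟩
    set rr := ∫ p, rho p.1 p.2 ∂π with hrr
    have hrr0 : 0 ≤ rr := integral_nonneg (fun p => rho_nonneg p.1 p.2)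
    set PP : Measure (ℝ≥0 × ℝ≥0) :=
      Measure.sum (fun k => ((q (k + 1) : ℝ≥0∞)) • cPow π (k + 1)) with hPP
    -- sum of weights is 1 in ℝ≥0∞
    have hw : (∑' k : ℕ, (q (k + 1) : ℝ≥0∞)) = 1 := by
      have hrs : Summable (fun k : ℕ => ((q (k + 1) : ℝ))) :=
        hq1'.summable.comp_injective (add_left_injective 1)
      have hs' : Summable (fun k : ℕ => q (k + 1)) := NNReal.summable_coe.1 hrs
      have hreal : (∑' k : ℕ, (q (k + 1) : ℝ)) = 1 := by
        have h0 := hq1'.summable.tsum_eq_zero_add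
        rw [hq1'.tsum_eq, hq0] at h0
        simpa using h0.symm
      have hnn : (∑' k : ℕ, q (k + 1)) = 1 := by
        have hc := NNReal.coe_tsum (L := SummationFilter.unconditional ℕ) (f := fun k : ℕ => q (k + 1))
        apply NNReal.coe_injective
        rw [hc, hreal]
        rfl
      rw [← ENNReal.coe_tsum hs', hnn]
      rfl
    have hPPprob : IsProbabilityMeasure PP := by
      constructor
      rw [hPP, Measure.sum_apply _ MeasurableSet.univ]
      simp only [Measure.smul_apply, measure_univ, smul_eq_mul, mul_one]
      exact hw
    haveI := hPPprob
    have hPPfst : PP.map Prod.fst = qMix q μ := by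
      rw [hPP, Measure.map_sum measurable_fst.aemeasurable, qMix]
      congr 1
      ext k : 1
      rw [Measure.map_smul, cPow_fst π μ hf]
    have hPPsnd : PP.map Prod.snd = qMix q ν := by
      rw [hPP, Measure.map_sum measurable_snd.aemeasurable, qMix]
      congr 1
      ext k : 1
      rw [Measure.map_smul, cPow_snd π ν hs]
    -- W ≤ integral over PP
    have hWle : W (qMix q μ) (qMix q ν) ≤ ∫ p, rho p.1 p.2 ∂PP := by
      refine csInf_le ⟨0, ?_⟩ ⟨PP, hPPprob, ⟨hPPfst, hPPsnd⟩, rfl⟩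
      rintro x ⟨π', _, _, rfl⟩
      exact integral_nonneg (fun p => rho_nonneg p.1 p.2)
    refine hWle.trans ?_
    -- compute the integral over the mixture
    rw [integral_sum_measure (integrable_rho PP)]
    have hterm : ∀ k : ℕ, ∫ p, rho p.1 p.2 ∂(((q (k + 1) : ℝ≥0∞)) • cPow π (k + 1))
        = (q (k + 1) : ℝ) * ∫ p, rho p.1 p.2 ∂(cPow π (k + 1)) := by
      intro k
      rw [integral_smul_measure]
      simp
    calc (∑' k, ∫ p, rho p.1 p.2 ∂(((q (k + 1) : ℝ≥0∞)) • cPow π (k + 1)))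
        = ∑' k, (q (k + 1) : ℝ) * ∫ p, rho p.1 p.2 ∂(cPow π (k + 1)) := by
          exact tsum_congr hterm
      _ ≤ ∑' k : ℕ, (((k : ℕ) + 1 : ℕ) : ℝ) * (q (k + 1) : ℝ) * rr := by
          have hsum2 : Summable (fun k : ℕ => (((k : ℕ) + 1 : ℕ) : ℝ) * (q (k + 1) : ℝ) * rr) :=
            (hshift.mul_right rr).summable
          refine Summable.tsum_le_tsum (fun k => ?_) ?_ hsum2
          · have := integral_rho_cPow_le π (k + 1)
            calc (q (k + 1) : ℝ) * ∫ p, rho p.1 p.2 ∂(cPow π (k + 1))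
                ≤ (q (k + 1) : ℝ) * ((((k : ℕ) + 1 : ℕ) : ℝ) * rr) := by
                  exact mul_le_mul_of_nonneg_left (by exact_mod_cast this) (q _).coe_nonneg
              _ = (((k : ℕ) + 1 : ℕ) : ℝ) * (q (k + 1) : ℝ) * rr := by ring
          · refine Summable.of_nonneg_of_le (fun k => ?_) (fun k => ?_) hsum2
            · exact mul_nonneg (q _).coe_nonneg
                (integral_nonneg (fun p => rho_nonneg p.1 p.2))
            · have := integral_rho_cPow_le π (k + 1)
              calc (q (k + 1) : ℝ) * ∫ p, rho p.1 p.2 ∂(cPow π (k + 1))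
                  ≤ (q (k + 1) : ℝ) * ((((k : ℕ) + 1 : ℕ) : ℝ) * rr) :=
                    mul_le_mul_of_nonneg_left (by exact_mod_cast this) (q _).coe_nonneg
                _ = (((k : ℕ) + 1 : ℕ) : ℝ) * (q (k + 1) : ℝ) * rr := by ring
      _ = m₁ * rr := by rw [(hshift.mul_right rr).tsum_eq]
  -- conclude using sInf
  have hdiv : W (qMix q μ) (qMix q ν) / m₁ ≤ sInf S :=
    le_csInf hSne (fun r hr => (div_le_iff₀ hm₁pos).2 (by linarith [key r hr]))
  have : W μ ν = sInf S := rfl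
  rw [this]
  calc W (qMix q μ) (qMix q ν) = W (qMix q μ) (qMix q ν) / m₁ * m₁ := by
        field_simp
    _ ≤ sInf S * m₁ := mul_le_mul_of_nonneg_right hdiv hm₁pos.le
    _ = m₁ * sInf S := mul_comm _ _
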